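/- Let K = k1/k2 be nonzero differential-reduced with d1 = deg k1, d2 = deg k2 and d1 = d2 − 1. If −lc(k1)/lc(k2) is not a positive integer, then for every nonzero p ∈ E[y], deg(k2·D(p) + k1·p) = d1 + deg p. -/
import Mathlib


open Polynomial

/-- `K = k1/k2` is differential-reduced: `gcd(k2, k1 - i·D(k2)) = 1` for all integers `i`. -/
def DiffReduced {E : Type*} [Field E] (k1 k2 : E[X]) : Prop :=
  ∀ i : ℤ, IsCoprime k2 (k1 - (i : E[X]) * derivative k2)

/-- The derivation `d/dy` on the field of rational functions `E(y)`. -/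
noncomputable def Dr {E : Type*} [Field E] (f : RatFunc E) : RatFunc E :=
  (algebraMap E[X] (RatFunc E) (derivative f.num) * algebraMap E[X] (RatFunc E) f.denom -
      algebraMap E[X] (RatFunc E) f.num * algebraMap E[X] (RatFunc E) (derivative f.denom)) /
    (algebraMap E[X] (RatFunc E) f.denom) ^ 2

theorem stmt_3 {E : Type*} [Field E] [CharZero E] (k1 k2 : E[X]) (hk1 : k1 ≠ 0)
    (hk2 : k2 ≠ 0) (hcop : IsCoprime k1 k2) (hdr : DiffReduced k1 k2)
    (hdeg : k1.natDegree + 1 = k2.natDegree)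
    (hτ : ∀ n : ℕ, 0 < n → -(k1.leadingCoeff / k2.leadingCoeff) ≠ (n : E))
    (p : E[X]) (hp : p ≠ 0) :
    (k2 * derivative p + k1 * p).natDegree = k1.natDegree + p.natDegree := by
  rcases Nat.eq_zero_or_pos p.natDegree with h0 | hpos
  · obtain ⟨c, rfl⟩ := natDegree_eq_zero.mp h0
    simp only [derivative_C, mul_zero, zero_add]
    rw [natDegree_mul hk1 hp, natDegree_C]
  · have hk2lc : k2.leadingCoeff ≠ 0 := leadingCoeff_ne_zero.mpr hk2
    have hplc : p.leadingCoeff ≠ 0 := leadingCoeff_ne_zero.mpr hp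
    have key : k2.leadingCoeff * (p.natDegree : E) + k1.leadingCoeff ≠ 0 := by
      intro h
      apply hτ p.natDegree hpos
      field_simp
      linear_combination -h
    have e : p.natDegree - 1 + 1 = p.natDegree := Nat.succ_pred_eq_of_pos hpos
    have hd' : (derivative p).coeff (p.natDegree - 1) = p.leadingCoeff * p.natDegree := by
      rw [coeff_derivative, ← Nat.cast_add_one, e]
      rfl
    have hd'ne : (derivative p).coeff (p.natDegree - 1) ≠ 0 := by
      rw [hd']
      exact mul_ne_zero hplc (Nat.cast_ne_zero.mpr hpos.ne')
    have hdp : (derivative p).natDegree = p.natDegree - 1 :=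
      le_antisymm (natDegree_derivative_le p) (le_natDegree_of_ne_zero hd'ne)
    have hlc : (derivative p).leadingCoeff = p.leadingCoeff * p.natDegree := by
      rw [leadingCoeff, hdp, hd']
    have c1 : (k2 * derivative p).coeff (k1.natDegree + p.natDegree)
        = k2.leadingCoeff * (p.leadingCoeff * p.natDegree) := by
      rw [show k1.natDegree + p.natDegree = k2.natDegree + (derivative p).natDegree by omega,
        coeff_mul_degree_add_degree, hlc]
    have c2 : (k1 * p).coeff (k1.natDegree + p.natDegree)
        = k1.leadingCoeff * p.leadingCoeff := coeff_mul_degree_add_degree k1 p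
    have hcoeff : (k2 * derivative p + k1 * p).coeff (k1.natDegree + p.natDegree) ≠ 0 := by
      rw [coeff_add, c1, c2]
      exact fun h => (mul_ne_zero hplc key) (by linear_combination h)
    have hub : (k2 * derivative p + k1 * p).natDegree ≤ k1.natDegree + p.natDegree := by
      refine le_trans (natDegree_add_le _ _) (max_le ?_ ?_)
      · exact le_trans natDegree_mul_le (by omega)
      · exact le_trans natDegree_mul_le (by omega)
    exact le_antisymm hub (le_natDegree_of_ne_zero hcoeff)
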